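/- Let f ∈ L¹(ℝ; ℂ) ∩ L²(ℝ; ℂ) with ∫|f(t)|² dt = 1, and let f̂(ω) = ∫ f(t) e^{−iωt} dt be its Fourier transform. Assume ∫ t²|f(t)|² dt < ∞ and ∫ (log|ω|)² |f̂(ω)|² dω < ∞. Define e₁(f) = ∫ t|f(t)|² dt, σ₁(f) = ∫ (t − e₁(f))²|f(t)|² dt, e₂(f) = (2π)^{-1} ∫ (−log|ω|) |f̂(ω)|² dω, and σ₂(f) = (2π)^{-1} ∫ (−log|ω| − e₂(f))² |f̂(ω)|² dω. For b, a ∈ ℝ let f_{b,a}(t) = e^{−a/2} f(e^{−a}(t − b)). Then the global variances are constant on the orbit of f under the reduced affine group: e^{−2 e₂(f_{b,a})} σ₁(f_{b,a}) = e^{−2 e₂(f)} σ₁(f) and σ₂(f_{b,a}) = σ₂(f). Consequently, for any weights w₁, w₂ > 0 the global uncertainty S(f) = w₁ e^{−2 e₂(f)} σ₁(f) + w₂ σ₂(f) satisfies S(f_{b,a}) = S(f). -/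

import Mathlib

open MeasureTheory

open FourierTransform
open scoped Real

noncomputable section
namespace Stmt10Aux


/-- The Fourier kernel. -/
def ec (w v : ℝ) : ℂ := Complex.exp ((-2 * Real.pi * v * w : ℝ) * Complex.I)

lemma norm_ec (w v : ℝ) : ‖ec w v‖ = 1 := by
  simpa [ec] using Complex.norm_exp_ofReal_mul_I (-2 * Real.pi * v * w)

lemma continuous_ec (w : ℝ) : Continuous (ec w) := by
  apply Complex.continuous_exp.comp
  exact (Complex.continuous_ofReal.comp (by continuity)).mul continuous_const

lemma ec_add (w y t : ℝ) : ec w (y + t) = ec w y * ec w t := by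
  rw [ec, ec, ec, ← Complex.exp_add]
  congr 1
  push_cast
  ring

lemma ec_neg (w v : ℝ) : ec w (-v) = starRingEnd ℂ (ec w v) := by
  rw [ec, ec, ← Complex.exp_conj]
  congr 1
  simp only [map_mul, Complex.conj_ofReal, Complex.conj_I]
  push_cast
  ring

lemma fourier_eq (f : ℝ → ℂ) (w : ℝ) : 𝓕 f w = ∫ v : ℝ, ec w v * f v := by
  rw [Real.fourier_real_eq_integral_exp_smul]
  simp only [ec, smul_eq_mul]

lemma fourier_conv (f g : ℝ → ℂ) (hf : Integrable f) (hg : Integrable g) (w : ℝ) :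
    𝓕 (fun x => ∫ t : ℝ, f t * g (x - t)) w = 𝓕 f w * 𝓕 g w := by
  have hi : Integrable (fun p : ℝ × ℝ => f p.2 * g (p.1 - p.2))
      ((volume : Measure ℝ).prod volume) := by
    simpa only [ContinuousLinearMap.mul_apply'] using
      hf.convolution_integrand (ContinuousLinearMap.mul ℝ ℂ) hg
  have hi2 : Integrable (fun p : ℝ × ℝ => ec w p.1 * (f p.2 * g (p.1 - p.2)))
      ((volume : Measure ℝ).prod volume) := by
    refine hi.bdd_mul ((continuous_ec w).comp continuous_fst).aestronglyMeasurable
      (Filter.Eventually.of_forall fun p => le_of_eq (norm_ec w p.1))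
  calc 𝓕 (fun x => ∫ t : ℝ, f t * g (x - t)) w
      = ∫ x : ℝ, ∫ t : ℝ, ec w x * (f t * g (x - t)) := by
        rw [fourier_eq]
        congr 1; funext x
        rw [← integral_const_mul]
    _ = ∫ t : ℝ, ∫ x : ℝ, ec w x * (f t * g (x - t)) := integral_integral_swap hi2
    _ = ∫ t : ℝ, (ec w t * f t) * ∫ y : ℝ, ec w y * g y := by
        congr 1; funext t
        have step : ∀ x : ℝ, ec w x * (f t * g (x - t))
            = (ec w t * f t) * (ec w (x - t) * g (x - t)) := by
          intro x
          have : ec w x = ec w (x - t) * ec w t := by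
            rw [← ec_add, sub_add_cancel]
          rw [this]; ring
        simp_rw [step]
        rw [integral_const_mul,
          integral_sub_right_eq_self (fun y : ℝ => ec w y * g y) t]
    _ = 𝓕 f w * 𝓕 g w := by
        rw [integral_mul_const, fourier_eq, fourier_eq]

lemma fourier_conj (f : ℝ → ℂ) (w : ℝ) :
    𝓕 (fun x => starRingEnd ℂ (f (-x))) w = starRingEnd ℂ (𝓕 f w) := by
  rw [fourier_eq, fourier_eq, ← integral_conj]
  calc ∫ v : ℝ, ec w v * starRingEnd ℂ (f (-v))
      = ∫ v : ℝ, (fun y : ℝ => ec w (-y) * starRingEnd ℂ (f y)) (-v) := by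
        congr 1; funext v
        simp only [neg_neg]
    _ = ∫ v : ℝ, ec w (-v) * starRingEnd ℂ (f v) :=
        integral_neg_eq_self (fun y : ℝ => ec w (-y) * starRingEnd ℂ (f y)) volume
    _ = ∫ v : ℝ, starRingEnd ℂ (ec w v * f v) := by
        congr 1; funext v
        rw [map_mul, ec_neg]



lemma continuous_autocorr {f : ℝ → ℂ} (hf2 : MemLp f 2 (volume : Measure ℝ)) :
    Continuous (fun x : ℝ => ∫ t : ℝ, f t * starRingEnd ℂ (f (t - x))) := by
  set fL : Lp ℂ 2 (volume : Measure ℝ) := hf2.toLp f with hfL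
  set gm : ℝ → C(ℝ, ℝ) :=
    fun x => (ContinuousMap.curry ⟨fun p : ℝ × ℝ => p.2 - p.1, by continuity⟩) x with hgm_def
  have hgm : ∀ x : ℝ, MeasurePreserving (gm x) volume volume := fun x =>
    measurePreserving_sub_right volume x
  have hgc : Continuous gm :=
    (ContinuousMap.curry ⟨fun p : ℝ × ℝ => p.2 - p.1, by continuity⟩).continuous
  have hF : Continuous fun x : ℝ => Lp.compMeasurePreserving (gm x) (hgm x) fL :=
    Continuous.compMeasurePreservingLp continuous_const hgc hgm (by norm_num)
  have hinner : Continuous fun x : ℝ =>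
      (inner ℂ (Lp.compMeasurePreserving (gm x) (hgm x) fL :
        Lp ℂ 2 (volume : Measure ℝ)) fL : ℂ) :=
    hF.inner continuous_const
  have key : (fun x : ℝ => ∫ t : ℝ, f t * starRingEnd ℂ (f (t - x)))
      = fun x : ℝ => (inner ℂ (Lp.compMeasurePreserving (gm x) (hgm x) fL :
          Lp ℂ 2 (volume : Measure ℝ)) fL : ℂ) := by
    funext x
    rw [L2.inner_def]
    have h1 : (Lp.compMeasurePreserving (gm x) (hgm x) fL : ℝ → ℂ) =ᵐ[volume]
        fun t => f (t - x) := by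
      refine (Lp.coeFn_compMeasurePreserving fL (hgm x)).trans ?_
      exact (hgm x).quasiMeasurePreserving.ae_eq_comp (hf2.coeFn_toLp)
    refine (integral_congr_ae ?_).symm
    filter_upwards [h1, hf2.coeFn_toLp] with t ht1 ht2
    rw [RCLike.inner_apply, ht1, ht2]
  rw [key]
  exact hinner

lemma plancherel_aux {f : ℝ → ℂ} (hf1 : Integrable f)
    (hf2 : MemLp f 2 (volume : Measure ℝ))
    (hF2 : Integrable (fun ξ : ℝ => ‖𝓕 f ξ‖ ^ 2)) :
    ∫ ξ : ℝ, ‖𝓕 f ξ‖ ^ 2 = ∫ t : ℝ, ‖f t‖ ^ 2 := by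
  have hg1 : Integrable (fun y : ℝ => starRingEnd ℂ (f (-y))) := by
    have h1 : Integrable (fun y : ℝ => f (-y)) := hf1.comp_neg
    exact (Complex.conjCLE.toContinuousLinearMap.integrable_comp h1 :)
  have h_int : Integrable (fun x : ℝ => ∫ t : ℝ, f t * starRingEnd ℂ (f (-(x - t)))) := by
    have := hf1.integrable_convolution (ContinuousLinearMap.mul ℝ ℂ) hg1
    exact this
  have hFh : ∀ w : ℝ,
      𝓕 (fun x : ℝ => ∫ t : ℝ, f t * starRingEnd ℂ (f (-(x - t)))) w
        = ((‖𝓕 f w‖ ^ 2 : ℝ) : ℂ) := by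
    intro w
    rw [fourier_conv f (fun y : ℝ => starRingEnd ℂ (f (-y))) hf1 hg1 w, fourier_conj,
      Complex.mul_conj, Complex.normSq_eq_norm_sq]
  have hFh_int : Integrable (𝓕 (fun x : ℝ => ∫ t : ℝ, f t * starRingEnd ℂ (f (-(x - t))))) := by
    have : 𝓕 (fun x : ℝ => ∫ t : ℝ, f t * starRingEnd ℂ (f (-(x - t))))
        = fun w : ℝ => ((‖𝓕 f w‖ ^ 2 : ℝ) : ℂ) := funext hFh
    rw [this]
    exact hF2.ofReal
  have h_cont : Continuous (fun x : ℝ => ∫ t : ℝ, f t * starRingEnd ℂ (f (-(x - t)))) := by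
    have : (fun x : ℝ => ∫ t : ℝ, f t * starRingEnd ℂ (f (-(x - t))))
        = fun x : ℝ => ∫ t : ℝ, f t * starRingEnd ℂ (f (t - x)) := by
      funext x
      simp only [neg_sub]
    rw [this]
    exact continuous_autocorr hf2
  have hinv := h_int.fourierInv_fourier_eq hFh_int (h_cont.continuousAt (x := 0))
  have lhs : 𝓕⁻ (𝓕 (fun x : ℝ => ∫ t : ℝ, f t * starRingEnd ℂ (f (-(x - t))))) 0
      = ((∫ ξ : ℝ, ‖𝓕 f ξ‖ ^ 2 : ℝ) : ℂ) := by
    rw [Real.fourierInv_eq]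
    simp only [inner_zero_right, AddChar.map_zero_eq_one, one_smul]
    rw [show (fun v : ℝ => 𝓕 (fun x : ℝ => ∫ t : ℝ, f t * starRingEnd ℂ (f (-(x - t)))) v)
        = fun v : ℝ => ((‖𝓕 f v‖ ^ 2 : ℝ) : ℂ) from funext hFh]
    exact integral_ofReal
  have rhs : (∫ t : ℝ, f t * starRingEnd ℂ (f (-(0 - t)))) = ((∫ t : ℝ, ‖f t‖ ^ 2 : ℝ) : ℂ) := by
    rw [show ((∫ t : ℝ, ‖f t‖ ^ 2 : ℝ) : ℂ) = ∫ t : ℝ, ((‖f t‖ ^ 2 : ℝ) : ℂ)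
      from integral_ofReal.symm]
    congr 1; funext t
    simp only [zero_sub, neg_neg]
    rw [Complex.mul_conj, Complex.normSq_eq_norm_sq]
  have := lhs.symm.trans (hinv.trans rhs)
  exact_mod_cast this



lemma integral_scale_shift {E : Type*} [NormedAddCommGroup E] [NormedSpace ℝ E]
    (g : ℝ → E) (c d : ℝ) :
    ∫ t : ℝ, g (c * (t - d)) = |c⁻¹| • ∫ s : ℝ, g s := by
  rw [show (∫ t : ℝ, g (c * (t - d))) = ∫ t : ℝ, (fun x : ℝ => g (c * x)) (t - d) from rfl,
    integral_sub_right_eq_self (fun x : ℝ => g (c * x)) d]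
  exact Measure.integral_comp_mul_left g c

lemma FT_eq_fourier (u : ℝ → ℂ) (ω : ℝ)
    (h : ∀ w : ℝ, (𝓕 u) w = ∫ v : ℝ, Complex.exp ((-2 * Real.pi * v * w : ℝ) * Complex.I) * u v) :
    True := trivial


end Stmt10Aux
end


set_option maxHeartbeats 1000000 in
/-- The global variances `e^{−2e₂(f)} σ₁(f)` and `σ₂(f)` of the 1D wavelet
transform, and hence the global uncertainty
`S(f) = w₁ e^{−2e₂(f)} σ₁(f) + w₂ σ₂(f)`, are constant on orbits of the
reduced affine group. -/
theorem stmt10 (f : ℝ → ℂ)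
    (hf1 : Integrable f) (hf2 : MemLp f 2 (volume : Measure ℝ))
    (hnorm : ∫ t : ℝ, ‖f t‖ ^ 2 = 1)
    (hmom : Integrable (fun t : ℝ => t ^ 2 * ‖f t‖ ^ 2))
    (FT : (ℝ → ℂ) → ℝ → ℂ)
    (hFT : ∀ (u : ℝ → ℂ) (ω : ℝ),
      FT u ω = ∫ t : ℝ, u t * Complex.exp (-(ω * t : ℝ) * Complex.I))
    (hlog : Integrable (fun ω : ℝ => Real.log |ω| ^ 2 * ‖FT f ω‖ ^ 2))
    (e₁ σ₁ e₂ σ₂ : (ℝ → ℂ) → ℝ)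
    (he₁ : ∀ u : ℝ → ℂ, e₁ u = ∫ t : ℝ, t * ‖u t‖ ^ 2)
    (hσ₁ : ∀ u : ℝ → ℂ, σ₁ u = ∫ t : ℝ, (t - e₁ u) ^ 2 * ‖u t‖ ^ 2)
    (he₂ : ∀ u : ℝ → ℂ,
      e₂ u = (2 * Real.pi)⁻¹ * ∫ ω : ℝ, (-Real.log |ω|) * ‖FT u ω‖ ^ 2)
    (hσ₂ : ∀ u : ℝ → ℂ,
      σ₂ u = (2 * Real.pi)⁻¹ * ∫ ω : ℝ, (-Real.log |ω| - e₂ u) ^ 2 * ‖FT u ω‖ ^ 2)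
    (b a : ℝ)
    (fba : ℝ → ℂ)
    (hfba : ∀ t : ℝ, fba t =
      (Real.exp (-a / 2) : ℂ) * f (Real.exp (-a) * (t - b))) :
    Real.exp (-2 * e₂ fba) * σ₁ fba = Real.exp (-2 * e₂ f) * σ₁ f ∧
    σ₂ fba = σ₂ f ∧
    ∀ w₁ w₂ : ℝ, 0 < w₁ → 0 < w₂ →
      w₁ * (Real.exp (-2 * e₂ fba) * σ₁ fba) + w₂ * σ₂ fba
        = w₁ * (Real.exp (-2 * e₂ f) * σ₁ f) + w₂ * σ₂ f := by
  have hπ : (0:ℝ) < 2 * Real.pi := by positivity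
  have h1 : Real.exp a * Real.exp (-a) = 1 := by rw [← Real.exp_add]; simp
  have h1' : Real.exp (-a) * Real.exp a = 1 := by rw [← Real.exp_add]; simp
  have habs : |(Real.exp (-a))⁻¹| = Real.exp a := by
    rw [Real.exp_neg, inv_inv, abs_of_pos (Real.exp_pos a)]
  have habs2 : |(Real.exp a)⁻¹| = Real.exp (-a) := by
    rw [← Real.exp_neg, abs_of_pos (Real.exp_pos _)]
  have hfmeas := hf2.aestronglyMeasurable
  -- basic integrability
  have hfn2 : Integrable (fun t : ℝ => ‖f t‖ ^ 2) := by
    have h := hf2.integrable_norm_rpow two_ne_zero ENNReal.ofNat_ne_top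
    simpa [ENNReal.toReal_ofNat, Real.rpow_natCast] using h
  have ht1 : Integrable (fun t : ℝ => t * ‖f t‖ ^ 2) := by
    refine (hmom.add hfn2).mono'
      ((aemeasurable_id.mul
        (hfmeas.norm.aemeasurable.pow_const 2)).aestronglyMeasurable) ?_
    filter_upwards with t
    have h2 : (0:ℝ) ≤ ‖f t‖ ^ 2 := by positivity
    have h3 : |t| ≤ t ^ 2 + 1 := by
      nlinarith [sq_nonneg (|t| - 1), sq_abs t, abs_nonneg t]
    rw [Real.norm_eq_abs, abs_mul, abs_of_nonneg h2]
    simp only [Pi.add_apply]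
    nlinarith
  -- FT f basics
  have hFTf : ∀ ω : ℝ, FT f ω = 𝓕 f ((2 * Real.pi)⁻¹ * ω) := by
    intro ω
    rw [hFT f ω, Stmt10Aux.fourier_eq]
    congr 1; funext v
    rw [mul_comm (f v)]
    congr 1
    simp only [Stmt10Aux.ec]
    congr 1
    have hπC : (Real.pi : ℂ) ≠ 0 := Complex.ofReal_ne_zero.mpr Real.pi_ne_zero
    push_cast
    field_simp
  have h𝓕cont : Continuous (𝓕 f) :=
    VectorFourier.fourierIntegral_continuous Real.continuous_fourierChar
      (by exact continuous_inner) hf1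
  have hFTcont : Continuous (FT f) := by
    rw [show FT f = fun ω : ℝ => 𝓕 f ((2 * Real.pi)⁻¹ * ω) from funext hFTf]
    exact h𝓕cont.comp (continuous_const.mul continuous_id)
  have hFTbd : ∀ ω : ℝ, ‖FT f ω‖ ≤ ∫ t : ℝ, ‖f t‖ := by
    intro ω
    rw [hFT]
    refine le_trans (norm_integral_le_integral_norm _) (le_of_eq ?_)
    congr 1; funext t
    rw [norm_mul, ← Complex.ofReal_neg, Complex.norm_exp_ofReal_mul_I, mul_one]
  obtain ⟨M, hM0, hbM⟩ : ∃ M : ℝ, 0 ≤ M ∧ ∀ ω : ℝ, ‖FT f ω‖ ≤ M :=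
    ⟨∫ t : ℝ, ‖f t‖, integral_nonneg fun t => norm_nonneg _, hFTbd⟩
  have hFT2 : Integrable (fun ω : ℝ => ‖FT f ω‖ ^ 2) := by
    have hind : Integrable
        ((Set.Icc (-(Real.exp 1)) (Real.exp 1)).indicator fun _ : ℝ => M ^ 2) := by
      rw [integrable_indicator_iff measurableSet_Icc]
      exact integrableOn_const measure_Icc_lt_top.ne
    refine (hlog.add hind).mono' (hFTcont.norm.pow 2).aestronglyMeasurable ?_
    filter_upwards with ω
    rw [Real.norm_eq_abs, abs_of_nonneg (by positivity)]
    simp only [Pi.add_apply]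
    by_cases hc : 1 ≤ Real.log |ω| ^ 2
    · have hb1 : ‖FT f ω‖ ^ 2 ≤ Real.log |ω| ^ 2 * ‖FT f ω‖ ^ 2 :=
        le_mul_of_one_le_left (by positivity) hc
      have hb2 : 0 ≤ (Set.Icc (-(Real.exp 1)) (Real.exp 1)).indicator
          (fun _ : ℝ => M ^ 2) ω :=
        Set.indicator_nonneg (fun _ _ => by positivity) ω
      linarith
    · push_neg at hc
      have hmem : ω ∈ Set.Icc (-(Real.exp 1)) (Real.exp 1) := by
        have habsω : |ω| ≤ Real.exp 1 := by
          by_contra hgt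
          push_neg at hgt
          have hpos : (0:ℝ) < |ω| := lt_trans (Real.exp_pos 1) hgt
          have hl : (1:ℝ) ≤ Real.log |ω| := (Real.le_log_iff_exp_le hpos).2 hgt.le
          nlinarith
        exact abs_le.1 habsω
      rw [Set.indicator_of_mem hmem]
      have hb : ‖FT f ω‖ ≤ M := hbM ω
      have hb' : ‖FT f ω‖ ^ 2 ≤ M ^ 2 := by nlinarith [norm_nonneg (FT f ω)]
      nlinarith [mul_nonneg (sq_nonneg (Real.log |ω|)) (sq_nonneg ‖FT f ω‖)]
  have hlogFT : Integrable (fun ω : ℝ => Real.log |ω| * ‖FT f ω‖ ^ 2) := by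
    refine (hlog.add hFT2).mono'
      (((Real.measurable_log.comp measurable_abs).aemeasurable.mul
        (hFTcont.norm.pow 2).aestronglyMeasurable.aemeasurable).aestronglyMeasurable) ?_
    filter_upwards with ω
    have h2 : (0:ℝ) ≤ ‖FT f ω‖ ^ 2 := by positivity
    have h3 : abs (Real.log |ω|) ≤ Real.log |ω| ^ 2 + 1 := by
      nlinarith [sq_nonneg (abs (Real.log |ω|) - 1), sq_abs (Real.log |ω|),
        abs_nonneg (Real.log |ω|)]
    rw [Real.norm_eq_abs, abs_mul, abs_of_nonneg h2]
    simp only [Pi.add_apply]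
    nlinarith
  have hneglogFT : Integrable (fun ω : ℝ => (-Real.log |ω|) * ‖FT f ω‖ ^ 2) := by
    have heq : (fun ω : ℝ => (-Real.log |ω|) * ‖FT f ω‖ ^ 2)
        = fun ω : ℝ => -(Real.log |ω| * ‖FT f ω‖ ^ 2) := by funext ω; ring
    rw [heq]; exact hlogFT.neg
  -- Plancherel
  have h𝓕2 : Integrable (fun ξ : ℝ => ‖𝓕 f ξ‖ ^ 2) := by
    have h1i : Integrable (fun ω : ℝ => ‖𝓕 f ((2 * Real.pi)⁻¹ * ω)‖ ^ 2) := by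
      rw [show (fun ω : ℝ => ‖𝓕 f ((2 * Real.pi)⁻¹ * ω)‖ ^ 2)
          = fun ω : ℝ => ‖FT f ω‖ ^ 2 from funext fun ω => by rw [hFTf ω]]
      exact hFT2
    have h2i := h1i.comp_mul_left' (ne_of_gt hπ)
    refine h2i.congr (Filter.Eventually.of_forall fun ξ => ?_)
    beta_reduce
    rw [show (2 * Real.pi)⁻¹ * (2 * Real.pi * ξ) = ξ from by field_simp]
  have hplan𝓕 : ∫ ξ : ℝ, ‖𝓕 f ξ‖ ^ 2 = 1 := by
    rw [Stmt10Aux.plancherel_aux hf1 hf2 h𝓕2, hnorm]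
  have hplan : ∫ ω : ℝ, ‖FT f ω‖ ^ 2 = 2 * Real.pi := by
    rw [show (fun ω : ℝ => ‖FT f ω‖ ^ 2)
        = fun ω : ℝ => (fun ξ : ℝ => ‖𝓕 f ξ‖ ^ 2) ((2 * Real.pi)⁻¹ * ω) from
      funext fun ω => by rw [hFTf ω]]
    rw [Measure.integral_comp_mul_left (fun ξ : ℝ => ‖𝓕 f ξ‖ ^ 2) ((2 * Real.pi)⁻¹),
      hplan𝓕, inv_inv, smul_eq_mul, mul_one, abs_of_pos hπ]
  -- fba facts
  have hnormfba : ∀ t : ℝ,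
      ‖fba t‖ ^ 2 = Real.exp (-a) * ‖f (Real.exp (-a) * (t - b))‖ ^ 2 := by
    intro t
    rw [hfba t, norm_mul, Complex.norm_real, Real.norm_eq_abs,
      abs_of_pos (Real.exp_pos _), mul_pow]
    congr 1
    rw [sq, ← Real.exp_add]
    try norm_num
  have he₁fba : e₁ fba = Real.exp a * e₁ f + b := by
    rw [he₁ fba]
    rw [show (fun t : ℝ => t * ‖fba t‖ ^ 2)
        = fun t : ℝ => (fun s : ℝ => Real.exp (-a) * ((Real.exp a * s + b) * ‖f s‖ ^ 2))
            (Real.exp (-a) * (t - b)) from funext fun t => by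
      beta_reduce
      rw [hnormfba t, Real.exp_neg]
      field_simp
      try ring]
    rw [Stmt10Aux.integral_scale_shift
        (fun s : ℝ => Real.exp (-a) * ((Real.exp a * s + b) * ‖f s‖ ^ 2)) (Real.exp (-a)) b,
      habs, smul_eq_mul, integral_const_mul]
    have hsplit : ∫ s : ℝ, (Real.exp a * s + b) * ‖f s‖ ^ 2 = Real.exp a * e₁ f + b := by
      rw [show (fun s : ℝ => (Real.exp a * s + b) * ‖f s‖ ^ 2)
          = fun s : ℝ => Real.exp a * (s * ‖f s‖ ^ 2) + b * ‖f s‖ ^ 2 from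
        funext fun s => by ring]
      rw [integral_add (ht1.const_mul _) (hfn2.const_mul _), integral_const_mul,
        integral_const_mul, hnorm, he₁ f, mul_one]
    rw [hsplit, ← mul_assoc, h1, one_mul]
  have hσ₁fba : σ₁ fba = Real.exp (2 * a) * σ₁ f := by
    rw [hσ₁ fba, he₁fba]
    rw [show (fun t : ℝ => (t - (Real.exp a * e₁ f + b)) ^ 2 * ‖fba t‖ ^ 2)
        = fun t : ℝ => (fun s : ℝ => Real.exp a * ((s - e₁ f) ^ 2 * ‖f s‖ ^ 2))
            (Real.exp (-a) * (t - b)) from funext fun t => by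
      beta_reduce
      rw [hnormfba t, Real.exp_neg]
      field_simp
      ring]
    rw [Stmt10Aux.integral_scale_shift
        (fun s : ℝ => Real.exp a * ((s - e₁ f) ^ 2 * ‖f s‖ ^ 2)) (Real.exp (-a)) b,
      habs, smul_eq_mul, integral_const_mul, ← hσ₁ f,
      ← mul_assoc, ← Real.exp_add, show a + a = 2 * a from by ring]
  -- FT of fba
  have hFTfba : ∀ ω : ℝ, FT fba ω
      = ((Real.exp (a / 2) : ℝ) : ℂ)
        * (Complex.exp (-(ω * b : ℝ) * Complex.I) * FT f (Real.exp a * ω)) := by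
    intro ω
    rw [hFT fba ω]
    rw [show (fun t : ℝ => fba t * Complex.exp (-(ω * t : ℝ) * Complex.I))
        = fun t : ℝ => (fun s : ℝ => ((Real.exp (-a / 2) : ℝ) : ℂ)
            * (Complex.exp (-(ω * b : ℝ) * Complex.I)
              * (f s * Complex.exp (-(Real.exp a * ω * s : ℝ) * Complex.I))))
            (Real.exp (-a) * (t - b)) from funext fun t => by
      beta_reduce
      rw [hfba t]
      rw [show Real.exp a * ω * (Real.exp (-a) * (t - b)) = ω * (t - b) from by
        rw [Real.exp_neg]; field_simp]
      rw [show Complex.exp (-(ω * t : ℝ) * Complex.I)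
          = Complex.exp (-(ω * b : ℝ) * Complex.I)
            * Complex.exp (-(ω * (t - b) : ℝ) * Complex.I) from by
        rw [← Complex.exp_add]; congr 1; push_cast; ring]
      ring]
    rw [Stmt10Aux.integral_scale_shift
        (fun s : ℝ => ((Real.exp (-a / 2) : ℝ) : ℂ)
          * (Complex.exp (-(ω * b : ℝ) * Complex.I)
            * (f s * Complex.exp (-(Real.exp a * ω * s : ℝ) * Complex.I))))
        (Real.exp (-a)) b,
      habs, integral_const_mul, integral_const_mul,
      ← hFT f (Real.exp a * ω), Complex.real_smul, ← mul_assoc, ← Complex.ofReal_mul,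
      ← Real.exp_add, show a + -a / 2 = a / 2 from by ring]
  have hnFTfba : ∀ ω : ℝ,
      ‖FT fba ω‖ ^ 2 = Real.exp a * ‖FT f (Real.exp a * ω)‖ ^ 2 := by
    intro ω
    rw [hFTfba ω, norm_mul, norm_mul, ← Complex.ofReal_neg, Complex.norm_exp_ofReal_mul_I, one_mul,
      Complex.norm_real, Real.norm_eq_abs, abs_of_pos (Real.exp_pos _), mul_pow]
    congr 1
    rw [sq, ← Real.exp_add]
    try norm_num
  -- a.e. nonzero
  have h0ae : ∀ᵐ x : ℝ ∂(volume : Measure ℝ), x ≠ 0 := by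
    filter_upwards [compl_mem_ae_iff.2 (measure_singleton (0:ℝ))] with x hx
    simpa using hx
  -- e₂ of fba
  have he₂fba : e₂ fba = a + e₂ f := by
    rw [he₂ fba]
    rw [show (fun ω : ℝ => (-Real.log |ω|) * ‖FT fba ω‖ ^ 2)
        = fun ω : ℝ => (fun x : ℝ =>
            (-Real.log |Real.exp (-a) * x|) * (Real.exp a * ‖FT f x‖ ^ 2))
            (Real.exp a * ω) from funext fun ω => by
      beta_reduce
      rw [hnFTfba ω, show Real.exp (-a) * (Real.exp a * ω) = ω from by
        rw [← mul_assoc, h1', one_mul]]]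
    rw [Measure.integral_comp_mul_left
        (fun x : ℝ => (-Real.log |Real.exp (-a) * x|) * (Real.exp a * ‖FT f x‖ ^ 2))
        (Real.exp a),
      habs2, smul_eq_mul]
    have hae : (fun x : ℝ =>
        (-Real.log |Real.exp (-a) * x|) * (Real.exp a * ‖FT f x‖ ^ 2))
        =ᵐ[(volume : Measure ℝ)] fun x : ℝ =>
          Real.exp a * (a * ‖FT f x‖ ^ 2 + (-Real.log |x|) * ‖FT f x‖ ^ 2) := by
      filter_upwards [h0ae] with x hx
      rw [abs_mul, Real.log_mul (ne_of_gt (abs_pos.2 (Real.exp_ne_zero _)))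
        (abs_ne_zero.2 hx), abs_of_pos (Real.exp_pos _), Real.log_exp]
      ring
    rw [integral_congr_ae hae, integral_const_mul,
      integral_add (hFT2.const_mul a) hneglogFT, integral_const_mul, hplan, he₂ f,
      ← mul_assoc (Real.exp (-a)), h1', one_mul]
    field_simp
    try ring
  -- σ₂ of fba
  have hσ₂fba : σ₂ fba = σ₂ f := by
    rw [hσ₂ fba, hσ₂ f, he₂fba]
    congr 1
    rw [show (fun ω : ℝ => (-Real.log |ω| - (a + e₂ f)) ^ 2 * ‖FT fba ω‖ ^ 2)
        = fun ω : ℝ => (fun x : ℝ =>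
            (-Real.log |Real.exp (-a) * x| - (a + e₂ f)) ^ 2
              * (Real.exp a * ‖FT f x‖ ^ 2)) (Real.exp a * ω) from funext fun ω => by
      beta_reduce
      rw [hnFTfba ω, show Real.exp (-a) * (Real.exp a * ω) = ω from by
        rw [← mul_assoc, h1', one_mul]]]
    have hae : (fun x : ℝ =>
        (-Real.log |Real.exp (-a) * x| - (a + e₂ f)) ^ 2 * (Real.exp a * ‖FT f x‖ ^ 2))
        =ᵐ[(volume : Measure ℝ)] fun x : ℝ =>
          Real.exp a * ((-Real.log |x| - e₂ f) ^ 2 * ‖FT f x‖ ^ 2) := by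
      filter_upwards [h0ae] with x hx
      rw [abs_mul, Real.log_mul (ne_of_gt (abs_pos.2 (Real.exp_ne_zero _)))
        (abs_ne_zero.2 hx), abs_of_pos (Real.exp_pos _), Real.log_exp]
      ring
    rw [Measure.integral_comp_mul_left
        (fun x : ℝ => (-Real.log |Real.exp (-a) * x| - (a + e₂ f)) ^ 2
          * (Real.exp a * ‖FT f x‖ ^ 2)) (Real.exp a),
      habs2, smul_eq_mul, integral_congr_ae hae,
      integral_const_mul, ← mul_assoc, h1', one_mul]
  -- conclusion
  have hmain1 : Real.exp (-2 * e₂ fba) * σ₁ fba = Real.exp (-2 * e₂ f) * σ₁ f := by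
    rw [he₂fba, hσ₁fba, ← mul_assoc, ← Real.exp_add,
      show -2 * (a + e₂ f) + 2 * a = -2 * e₂ f from by ring]
  exact ⟨hmain1, hσ₂fba, fun w₁ w₂ _ _ => by rw [hmain1, hσ₂fba]⟩
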